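/- Let p be an odd prime, m, k positive integers with m/gcd(m,k) odd, α a non-square element of F_{p^m}, and σ a field automorphism of F_{p^m}. Define on F_{p^m} × F_{p^m} the product (a,b)*(c,d) = (a∘c + α·σ(b∘d), ad + bc), where x∘y = x^(p^k)·y + y^(p^k)·x. Then * has no zero divisors: if (a,b)*(c,d) = (0,0) then (a,b) = (0,0) or (c,d) = (0,0). -/

import Mathlib

theorem stmt_4 (p m k : ℕ) (hp : p.Prime) (hodd : Odd p)
    (hm : 0 < m) (hk : 0 < k) (h : Odd (m / Nat.gcd m k))
    (F : Type*) [Field F] [Fintype F] (hF : Fintype.card F = p ^ m)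
    (α : F) (hα : ¬ IsSquare α) (σ : F ≃+* F) :
    ∀ a b c d : F,
      (a ^ (p ^ k) * c + c ^ (p ^ k) * a + α * σ (b ^ (p ^ k) * d + d ^ (p ^ k) * b) = 0 ∧
        a * d + b * c = 0) →
      (a = 0 ∧ b = 0) ∨ (c = 0 ∧ d = 0) := by
  set q := p ^ k with hq
  set g := Nat.gcd m k with hg
  have hp1 : 1 < p := hp.one_lt
  have hgpos : 0 < g := Nat.gcd_pos_of_pos_left k hm
  have hpg1 : 1 < p ^ g := Nat.one_lt_pow hgpos.ne' hp1
  have hq1 : 1 ≤ q := Nat.one_le_pow _ _ hp.pos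
  -- arithmetic fact 1 : p^g - 1 divides q - 1
  have hdvdk : p ^ g - 1 ∣ q - 1 := by
    obtain ⟨k', hk'⟩ := Nat.gcd_dvd_right m k
    have := Nat.sub_dvd_pow_sub_pow (p ^ g) 1 k'
    simpa [← pow_mul, hg, ← hk', hq] using this
  -- arithmetic fact 2 : p^m - 1 = (p^g - 1) * S with S odd
  obtain ⟨S, hSodd, hSeq⟩ :
      ∃ S : ℕ, Odd S ∧ (p ^ g - 1) * S = p ^ m - 1 := by
    set m' := m / g with hm'
    refine ⟨∑ i ∈ Finset.range m', (p ^ g) ^ i, ?_, ?_⟩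
    · rw [Nat.odd_iff, Finset.sum_nat_mod]
      have : ∀ i ∈ Finset.range m', (p ^ g) ^ i % 2 = 1 := by
        intro i _
        have : Odd ((p ^ g) ^ i) := (hodd.pow).pow
        exact Nat.odd_iff.mp this
      rw [Finset.sum_congr rfl this]
      simpa using Nat.odd_iff.mp h
    · have hgm : g * m' = m := Nat.mul_div_cancel' (Nat.gcd_dvd_left m k)
      have hZ : ((p : ℤ) ^ g - 1) * (∑ i ∈ Finset.range m', ((p : ℤ) ^ g) ^ i)
          = (p : ℤ) ^ m - 1 := by
        rw [mul_comm, geom_sum_mul, ← pow_mul, hgm]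
      have h1 : (1 : ℕ) ≤ p ^ g := hpg1.le
      have h2 : (1 : ℕ) ≤ p ^ m := Nat.one_le_pow _ _ hp.pos
      apply Nat.cast_injective (R := ℤ)
      push_cast [Nat.cast_sub h1, Nat.cast_sub h2]
      exact hZ
  -- field-side basic facts
  have hcard_odd : Fintype.card F % 2 = 1 := by
    rw [hF]; exact Nat.odd_iff.mp hodd.pow
  have hchar : ringChar F ≠ 2 := by
    intro hc
    rw [FiniteField.even_card_iff_char_two.mp hc] at hcard_odd
    exact absurd hcard_odd (by norm_num)
  have hneg : (-1 : F) ≠ 1 := Ring.neg_one_ne_one_of_char_ne_two hchar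
  -- key lemma : no solutions to z^(q-1) = -1
  have hL1 : ∀ z : F, z ≠ 0 → z ^ (q - 1) = -1 → False := by
    intro z hz hzq
    obtain ⟨r, hr⟩ := hdvdk
    have hw : (z ^ r) ^ (p ^ g - 1) = -1 := by
      rw [← pow_mul, mul_comm, ← hr, hzq]
    have h1 : (z ^ r) ^ (p ^ m - 1) = 1 := by
      rw [← hF]
      exact FiniteField.pow_card_sub_one_eq_one _ (pow_ne_zero _ hz)
    rw [← hSeq, pow_mul, hw, hSodd.neg_one_pow] at h1
    exact hneg h1
  -- key lemma : x ∘ y = 0 implies x = 0 or y = 0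
  have hK : ∀ x y : F, x ^ q * y + y ^ q * x = 0 → x = 0 ∨ y = 0 := by
    intro x y hxy
    by_contra hc
    push_neg at hc
    obtain ⟨hx, hy⟩ := hc
    have hyq : y ^ q ≠ 0 := pow_ne_zero _ hy
    have hxq : x ^ q * y = -(y ^ q * x) := eq_neg_of_add_eq_zero_left hxy
    set z := x * y⁻¹ with hzdef
    have hz : z ≠ 0 := mul_ne_zero hx (inv_ne_zero hy)
    have hzq : z ^ q = -z := by
      have e1 : z ^ q * (y ^ q * y) = x ^ q * y := by
        rw [hzdef, mul_pow, inv_pow]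
        field_simp
      have e2 : -z * (y ^ q * y) = -(y ^ q * x) := by
        rw [hzdef]; field_simp
      exact mul_right_cancel₀ (mul_ne_zero hyq hy) (by rw [e1, e2, hxq])
    have hzq' : z ^ (q - 1) * z = -1 * z := by
      rw [← pow_succ, Nat.sub_add_cancel hq1, hzq, neg_one_mul]
    exact hL1 z hz (mul_right_cancel₀ hz hzq')
  have hqodd : Odd q := hodd.pow
  set e := Fintype.card F / 2 with he
  have h2e : 2 * e = Fintype.card F - 1 := Nat.two_mul_odd_div_two hcard_odd
  have hα0 : α ≠ 0 := by
    rintro rfl; exact hα ⟨0, (mul_zero 0).symm⟩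
  have hαe : α ^ e = -1 := by
    rcases FiniteField.pow_dichotomy hchar hα0 with h1 | h1
    · exact absurd ((FiniteField.isSquare_iff hchar hα0).mpr h1) hα
    · exact h1
  -- main proof
  intro a b c d ⟨h1, h2⟩
  by_cases hb : b = 0
  · subst hb
    rw [zero_mul, add_zero] at h2
    rcases mul_eq_zero.mp h2 with ha | hd
    · exact Or.inl ⟨ha, rfl⟩
    · subst hd
      simp only [zero_mul, mul_zero, add_zero, map_zero] at h1
      rcases hK a c h1 with ha | hc
      · exact Or.inl ⟨ha, rfl⟩
      · exact Or.inr ⟨hc, rfl⟩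
  · by_cases hd : d = 0
    · subst hd
      rw [mul_zero, zero_add] at h2
      rcases mul_eq_zero.mp h2 with hb' | hc
      · exact absurd hb' hb
      · exact Or.inr ⟨hc, rfl⟩
    · exfalso
      have hs0 : b ^ q * d + d ^ q * b ≠ 0 := by
        intro hsz
        rcases hK b d hsz with h' | h' <;> [exact hb h'; exact hd h']
      obtain ⟨t, ha'⟩ : ∃ t : F, a = t * b := ⟨a * b⁻¹, by field_simp⟩
      have hc' : c = -(t * d) := by
        apply mul_left_cancel₀ hb
        linear_combination h2 - d * ha'
      have key : α * σ (b ^ q * d + d ^ q * b)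
          = t ^ (q + 1) * (b ^ q * d + d ^ q * b) := by
        rw [ha', hc'] at h1
        rw [hqodd.neg_pow, mul_pow, mul_pow] at h1
        linear_combination h1
      obtain ⟨s, hs⟩ : ∃ s : F, s = b ^ q * d + d ^ q * b := ⟨_, rfl⟩
      rw [← hs] at key hs0
      have ht0 : t ≠ 0 := by
        rintro rfl
        rw [zero_pow (Nat.succ_ne_zero q), zero_mul] at key
        rcases mul_eq_zero.mp key with h' | h'
        · exact hα0 h'
        · exact hs0 (by simpa using h')
      have hse := FiniteField.pow_dichotomy hchar hs0
      have hte := FiniteField.pow_dichotomy hchar ht0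
      have hσse : (σ s) ^ e = s ^ e := by
        rw [← map_pow]
        rcases hse with h' | h' <;> rw [← he] at h' <;> rw [h'] <;> simp
      have hteq : (t ^ e) ^ (q + 1) = 1 := by
        rcases hte with h' | h' <;> rw [← he] at h' <;> rw [h']
        · exact one_pow _
        · exact (hqodd.add_one).neg_one_pow
      have hkey_e : α ^ e * (σ s) ^ e = (t ^ e) ^ (q + 1) * s ^ e := by
        rw [← mul_pow, key, mul_pow, ← pow_mul, mul_comm (q + 1) e, pow_mul]
      rw [hαe, hσse, hteq, one_mul, neg_one_mul] at hkey_e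
      rcases hse with h' | h' <;> rw [← he] at h' <;> rw [h'] at hkey_e
      · exact hneg hkey_e
      · rw [neg_neg] at hkey_e
        exact hneg hkey_e.symm
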